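/- arXiv:2309.11203 — 2 statements merged into one kernel-verified Lean document; each statement's English description precedes it below -/
import Mathlib

section
/- Let G be a simple graph on a finite vertex set of cardinality n, with c connected components. Then the maximal number of colors used by a Gallai coloring of G equals n − c. Precisely, n − c is the greatest element of the set of natural numbers k for which there exists a Gallai edge coloring of G whose image has exactly k elements. -/
/-- A Gallai coloring of a simple graph: a coloring of its edge set such that every
cycle contains two distinct edges with the same color (no rainbow cycle). -/
def IsGallaiColoring {V C : Type*} (G : SimpleGraph V) (ε : G.edgeSet → C) : Prop :=
  ∀ (v : V) (w : G.Walk v v), w.IsCycle →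
    ∃ e f : G.edgeSet, ↑e ∈ w.edges ∧ ↑f ∈ w.edges ∧ e ≠ f ∧ ε e = ε f

namespace GallaiAux

open SimpleGraph

variable {V : Type*}

/-- The chosen root of the connected component of `v`. -/
noncomputable def root (G : SimpleGraph V) (v : V) : V :=
  Quot.out (G.connectedComponentMk v)

lemma mk_root (G : SimpleGraph V) (v : V) :
    G.connectedComponentMk (root G v) = G.connectedComponentMk v :=
  Quot.out_eq _

lemma reachable_root (G : SimpleGraph V) (v : V) : G.Reachable v (root G v) :=
  (ConnectedComponent.eq.mp (mk_root G v)).symm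

lemma root_eq_of_reachable {G : SimpleGraph V} {u v : V} (h : G.Reachable u v) :
    root G u = root G v := by
  unfold root
  rw [ConnectedComponent.eq.mpr h]

lemma root_eq_of_adj {G : SimpleGraph V} {u v : V} (h : G.Adj u v) :
    root G u = root G v :=
  root_eq_of_reachable h.reachable

/-- Distance to the root of the component. -/
noncomputable def d (G : SimpleGraph V) (v : V) : ℕ := G.dist v (root G v)

lemma d_ne_zero {G : SimpleGraph V} {v : V} (h : root G v ≠ v) : d G v ≠ 0 :=
  SimpleGraph.dist_ne_zero_iff_ne_and_reachable.mpr ⟨fun hv => h hv.symm, reachable_root G v⟩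

lemma d_eq_zero {G : SimpleGraph V} {v : V} (h : root G v = v) : d G v = 0 := by
  unfold d
  rw [h, SimpleGraph.dist_self]

lemma exists_adj_dist_lt {G : SimpleGraph V} {v r : V} (h : G.dist v r ≠ 0) :
    ∃ u, G.Adj v u ∧ G.dist u r < G.dist v r := by
  obtain ⟨p, hp⟩ := SimpleGraph.exists_walk_of_dist_ne_zero h
  cases p with
  | nil => simp at h
  | @cons _ u _ hadj q =>
    refine ⟨u, hadj, ?_⟩
    have hq : G.dist u r ≤ q.length := SimpleGraph.dist_le q
    have hlen : q.length + 1 = G.dist v r := by simpa using hp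
    omega

lemma exists_adj_d_lt {G : SimpleGraph V} {v : V} (h : root G v ≠ v) :
    ∃ u, G.Adj v u ∧ d G u < d G v := by
  obtain ⟨u, hadj, hlt⟩ := exists_adj_dist_lt (d_ne_zero h)
  refine ⟨u, hadj, ?_⟩
  have hru : root G u = root G v := root_eq_of_adj hadj.symm
  unfold d
  rw [hru]
  exact hlt

section KeyCount

variable [Fintype V]

/-- An injective "key" for each vertex, ordering first by distance to the root. -/
noncomputable def key (G : SimpleGraph V) (v : V) : ℕ :=
  d G v * Fintype.card V + (Fintype.equivFin V v : ℕ)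

lemma key_lt_of_d_lt {G : SimpleGraph V} {u v : V} (h : d G u < d G v) :
    key G u < key G v := by
  have h1 : ((Fintype.equivFin V u : ℕ)) < Fintype.card V := (Fintype.equivFin V u).isLt
  have h2 : (d G u + 1) * Fintype.card V ≤ d G v * Fintype.card V :=
    Nat.mul_le_mul_right _ h
  unfold key
  calc d G u * Fintype.card V + (Fintype.equivFin V u : ℕ)
      < (d G u + 1) * Fintype.card V := by nlinarith
    _ ≤ d G v * Fintype.card V := h2
    _ ≤ d G v * Fintype.card V + (Fintype.equivFin V v : ℕ) := Nat.le_add_right _ _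

lemma key_injective {G : SimpleGraph V} : Function.Injective (key G) := by
  intro u v h
  have hd : d G u = d G v := by
    rcases Nat.lt_trichotomy (d G u) (d G v) with h' | h' | h'
    · exact absurd h (Nat.ne_of_lt (key_lt_of_d_lt h'))
    · exact h'
    · exact absurd h.symm (Nat.ne_of_lt (key_lt_of_d_lt h'))
  have : ((Fintype.equivFin V u : ℕ)) = (Fintype.equivFin V v : ℕ) := by
    unfold key at h
    rw [hd] at h
    omega
  exact (Fintype.equivFin V).injective (Fin.ext this)

lemma ncard_nonroots (G : SimpleGraph V) :
    {v : V | root G v ≠ v}.ncard = Fintype.card V - Nat.card G.ConnectedComponent := by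
  classical
  have hR : {v : V | root G v = v}.ncard = Nat.card G.ConnectedComponent := by
    rw [← Nat.card_coe_set_eq]
    refine Nat.card_eq_of_bijective
      (fun x => G.connectedComponentMk x.1) ⟨?_, ?_⟩
    · rintro ⟨x, hx⟩ ⟨y, hy⟩ hxy
      change G.connectedComponentMk x = G.connectedComponentMk y at hxy
      have hroot : root G x = root G y := by unfold root; rw [hxy]
      apply Subtype.ext
      show x = y
      calc x = root G x := hx.symm
        _ = root G y := hroot
        _ = y := hy
    · intro C
      refine ⟨⟨Quot.out C, ?_⟩, ?_⟩
      · show root G (Quot.out C) = Quot.out C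
        unfold root
        congr 1
        exact Quot.out_eq C
      · show G.connectedComponentMk (Quot.out C) = C
        exact Quot.out_eq C
  have hcompl : {v : V | root G v ≠ v} = {v : V | root G v = v}ᶜ := by
    ext v; simp
  have hsum := Set.ncard_add_ncard_compl {v : V | root G v = v}
  rw [hcompl]
  rw [hR] at hsum
  have : Nat.card V = Fintype.card V := Nat.card_eq_fintype_card
  omega

/-- The coloring of an edge by the larger key of its two endpoints. -/
noncomputable def col (G : SimpleGraph V) (e : G.edgeSet) : ℕ :=
  Sym2.lift ⟨fun a b => max (key G a) (key G b), fun a b => max_comm _ _⟩ e.1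

lemma col_mk {G : SimpleGraph V} {a b : V} (h : s(a, b) ∈ G.edgeSet) :
    col G ⟨s(a, b), h⟩ = max (key G a) (key G b) := rfl

lemma root_ne_of_adj_key_le {G : SimpleGraph V} {a b : V}
    (hab : G.Adj a b) (hle : key G a ≤ key G b) : root G b ≠ b := by
  intro hr
  have hroot : root G a = b := (root_eq_of_adj hab).trans hr
  have hda : d G a ≠ 0 := by
    apply d_ne_zero
    rw [hroot]
    exact hab.ne'
  have hdb : d G b = 0 := d_eq_zero hr
  have : key G b < key G a := key_lt_of_d_lt (by omega)
  omega

lemma range_col (G : SimpleGraph V) :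
    Set.range (col G) = key G '' {v : V | root G v ≠ v} := by
  ext x
  constructor
  · rintro ⟨⟨e, he⟩, rfl⟩
    induction e using Sym2.ind with
    | _ a b =>
      have hab : G.Adj a b := (G.mem_edgeSet).mp he
      rcases le_total (key G a) (key G b) with h | h
      · exact ⟨b, root_ne_of_adj_key_le hab h, by rw [col_mk, max_eq_right h]⟩
      · exact ⟨a, root_ne_of_adj_key_le hab.symm h, by rw [col_mk, max_eq_left h]⟩
  · rintro ⟨v, hv, rfl⟩
    obtain ⟨u, hadj, hd⟩ := exists_adj_d_lt hv
    refine ⟨⟨s(v, u), (G.mem_edgeSet).mpr hadj⟩, ?_⟩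
    rw [col_mk, max_eq_left (le_of_lt (key_lt_of_d_lt hd))]

lemma ncard_range_col (G : SimpleGraph V) :
    (Set.range (col G)).ncard = Fintype.card V - Nat.card G.ConnectedComponent := by
  rw [range_col, Set.ncard_image_of_injective _ key_injective, ncard_nonroots]

/-- In a cycle based at `m`, there are two edges of the form `s(m, u)`, `s(m, b)`
with `u ≠ b`. -/
lemma exists_two_incident_edges {G : SimpleGraph V} {m : V} (w : G.Walk m m)
    (hc : w.IsCycle) :
    ∃ u b, u ≠ b ∧ s(m, u) ∈ w.edges ∧ s(m, b) ∈ w.edges := by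
  cases w with
  | nil => exact absurd hc (SimpleGraph.Walk.IsCycle.not_of_nil)
  | @cons _ u _ hadj p =>
    have hcyc := (SimpleGraph.Walk.cons_isCycle_iff p hadj).mp hc
    cases p with
    | nil => exact absurd rfl hadj.ne
    | @cons _ y _ h₂ p₂ =>
      obtain ⟨x, q, h', hpq⟩ := SimpleGraph.Walk.exists_cons_eq_concat h₂ p₂
      have hxm : s(x, m) ∈ (SimpleGraph.Walk.cons h₂ p₂).edges := by
        rw [hpq, SimpleGraph.Walk.edges_concat]
        simp
      refine ⟨u, x, ?_, ?_, ?_⟩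
      · rintro rfl
        exact hcyc.2 (by rwa [Sym2.eq_swap] at hxm)
      · simp [SimpleGraph.Walk.edges_cons]
      · rw [SimpleGraph.Walk.edges_cons]
        right
        rwa [Sym2.eq_swap]

lemma col_isGallai (G : SimpleGraph V) : IsGallaiColoring G (col G) := by
  classical
  intro v w hw
  obtain ⟨m, hm⟩ : ∃ m, m ∈ w.support.argmax (key G) := by
    cases h : w.support.argmax (key G) with
    | none => exact absurd (List.argmax_eq_none.mp h) w.support_ne_nil
    | some m => exact ⟨m, rfl⟩
  have hmem : m ∈ w.support := List.argmax_mem hm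
  have hmax : ∀ a ∈ w.support, key G a ≤ key G m := fun a ha => List.le_of_mem_argmax ha hm
  obtain ⟨u, b, hub, hu, hb⟩ := exists_two_incident_edges (w.rotate m hmem) (hw.rotate hmem)
  have hu' : s(m, u) ∈ w.edges := (w.rotate_edges m hmem).mem_iff.mp hu
  have hb' : s(m, b) ∈ w.edges := (w.rotate_edges m hmem).mem_iff.mp hb
  have heu : s(m, u) ∈ G.edgeSet := w.edges_subset_edgeSet hu'
  have heb : s(m, b) ∈ G.edgeSet := w.edges_subset_edgeSet hb'
  have hum : u ∈ w.support := w.snd_mem_support_of_mem_edges hu'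
  have hbm : b ∈ w.support := w.snd_mem_support_of_mem_edges hb'
  refine ⟨⟨s(m, u), heu⟩, ⟨s(m, b), heb⟩, hu', hb', ?_, ?_⟩
  · intro hef
    have : s(m, u) = s(m, b) := congrArg Subtype.val hef
    rw [Sym2.eq_iff] at this
    rcases this with ⟨-, h1⟩ | ⟨h1, h2⟩
    · exact hub h1
    · exact ((G.mem_edgeSet).mp heu).ne (h2.symm)
  · rw [col_mk, col_mk, max_eq_left (hmax u hum), max_eq_left (hmax b hbm)]

end KeyCount

section Forest

lemma card_comp_le_of_le [Finite V] {H G : SimpleGraph V} (h : H ≤ G) :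
    Nat.card G.ConnectedComponent ≤ Nat.card H.ConnectedComponent := by
  apply Nat.card_le_card_of_surjective
    (ConnectedComponent.map (SimpleGraph.Hom.ofLE h))
  intro C
  refine ConnectedComponent.ind (fun v => ⟨H.connectedComponentMk v, ?_⟩) C
  simp [ConnectedComponent.map_mk]

lemma card_comp_delete_bridge [Finite V] {G : SimpleGraph V} {a b : V} (hadj : G.Adj a b)
    (hbr : ¬(G \ SimpleGraph.fromEdgeSet {s(a, b)}).Reachable a b) :
    Nat.card G.ConnectedComponent + 1 ≤
      Nat.card (G \ SimpleGraph.fromEdgeSet {s(a, b)}).ConnectedComponent := by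
  set H := G \ SimpleGraph.fromEdgeSet {s(a, b)} with hH
  have hle : H ≤ G := sdiff_le
  set φ : H.ConnectedComponent → G.ConnectedComponent :=
    ConnectedComponent.map (SimpleGraph.Hom.ofLE hle) with hφ
  have hsurj : Function.Surjective φ := by
    intro C
    refine ConnectedComponent.ind (fun v => ⟨H.connectedComponentMk v, ?_⟩) C
    simp [hφ, ConnectedComponent.map_mk]
  have hcard : Nat.card G.ConnectedComponent ≤ Nat.card H.ConnectedComponent :=
    Nat.card_le_card_of_surjective φ hsurj
  rcases Nat.lt_or_ge (Nat.card G.ConnectedComponent) (Nat.card H.ConnectedComponent) with h | h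
  · omega
  · exfalso
    have heq : Nat.card G.ConnectedComponent = Nat.card H.ConnectedComponent := le_antisymm hcard h
    have hbij : Function.Bijective φ :=
      (Nat.bijective_iff_surjective_and_card φ).mpr ⟨hsurj, heq.symm⟩
    have h1 : φ (H.connectedComponentMk a) = φ (H.connectedComponentMk b) := by
      simp only [hφ, ConnectedComponent.map_mk]
      exact ConnectedComponent.eq.mpr hadj.reachable
    have := hbij.injective h1
    exact hbr (ConnectedComponent.eq.mp this)

lemma isAcyclic_anti {H G : SimpleGraph V} (h : H ≤ G) (hG : G.IsAcyclic) :
    H.IsAcyclic := by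
  intro v c hc
  exact hG (c.transfer G (fun e he => SimpleGraph.edgeSet_mono h (c.edges_subset_edgeSet he))) (hc.transfer _)

lemma forest_bound [Fintype V] (H : SimpleGraph V) (hH : H.IsAcyclic) :
    H.edgeSet.ncard + Nat.card H.ConnectedComponent ≤ Fintype.card V := by
  classical
  generalize hm : H.edgeSet.ncard = m
  induction m generalizing H with
  | zero =>
    have hbot : H = ⊥ := by
      rw [← SimpleGraph.edgeSet_eq_empty]
      exact (Set.ncard_eq_zero (Set.toFinite _)).mp hm
    have : Nat.card H.ConnectedComponent ≤ Nat.card V := by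
      apply Nat.card_le_card_of_surjective H.connectedComponentMk
      intro C
      exact ConnectedComponent.ind (fun v => ⟨v, rfl⟩) C
    simpa [Nat.card_eq_fintype_card] using this
  | succ m ih =>
    have hne : H.edgeSet.Nonempty := by
      rw [Set.nonempty_iff_ne_empty]
      intro h0
      rw [h0] at hm
      simp at hm
    obtain ⟨e, he⟩ := hne
    induction e using Sym2.ind with
    | _ a b =>
      have hadj : H.Adj a b := (H.mem_edgeSet).mp he
      have hbridge : H.IsBridge s(a, b) :=
        (SimpleGraph.isAcyclic_iff_forall_adj_isBridge.mp hH) hadj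
      have hbr : ¬(H \ SimpleGraph.fromEdgeSet {s(a, b)}).Reachable a b :=
        (SimpleGraph.isBridge_iff.mp hbridge)
      set H' := H \ SimpleGraph.fromEdgeSet {s(a, b)} with hH'
      have hdel : H' = H.deleteEdges {s(a, b)} := rfl
      have hE' : H'.edgeSet = H.edgeSet \ {s(a, b)} := by
        rw [hdel]
        exact SimpleGraph.edgeSet_deleteEdges _
      have hm' : H'.edgeSet.ncard = m := by
        rw [hE', Set.ncard_diff_singleton_of_mem he, hm]
        omega
      have hacyc' : H'.IsAcyclic := isAcyclic_anti sdiff_le hH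
      have h1 := ih H' hacyc' hm'
      have h2 := card_comp_delete_bridge hadj hbr
      rw [← hH'] at h2
      omega

end Forest

end GallaiAux

/-- For a simple graph `G` on `n` vertices with `c` connected components, the
maximal number of colors used by a Gallai coloring of `G` is `n - c`:
`n - c` is the greatest `k` such that some Gallai coloring of `G` uses exactly
`k` colors. -/
theorem gallai_max_colors_eq_card_sub_components {V : Type*} [Fintype V]
    (G : SimpleGraph V) (n c : ℕ) (hn : Fintype.card V = n)
    (hc : Nat.card G.ConnectedComponent = c) :
    IsGreatest {k : ℕ | ∃ ε : G.edgeSet → ℕ,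
      IsGallaiColoring G ε ∧ (Set.range ε).ncard = k} (n - c) := by
  classical
  subst hn hc
  constructor
  · exact ⟨GallaiAux.col G, GallaiAux.col_isGallai G, GallaiAux.ncard_range_col G⟩
  · rintro k ⟨ε, hgal, hk⟩
    -- choose a representative edge for each color
    have hchoice : ∀ x : Set.range ε, ∃ e : G.edgeSet, ε e = x := fun x => x.2
    choose g hg using hchoice
    have hginj : Function.Injective g := by
      intro x y hxy
      apply Subtype.ext
      rw [← hg x, ← hg y, hxy]
    set E0 : Set (Sym2 V) := Subtype.val '' Set.range g with hE0
    have hE0G : E0 ⊆ G.edgeSet := by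
      rintro _ ⟨e', -, rfl⟩
      exact e'.2
    set H := SimpleGraph.fromEdgeSet E0 with hHdef
    have hHG : H ≤ G := by
      intro a b hab
      rw [hHdef, SimpleGraph.fromEdgeSet_adj] at hab
      exact (G.mem_edgeSet).mp (hE0G hab.1)
    have hHE : H.edgeSet = E0 := by
      rw [hHdef, SimpleGraph.edgeSet_fromEdgeSet]
      apply sdiff_eq_self_iff_disjoint.mpr
      rw [Set.disjoint_left]
      intro e hdiag heE0
      exact absurd hdiag (G.not_isDiag_of_mem_edgeSet (hE0G heE0))
    -- H is acyclic because ε is a Gallai coloring and has injective colors on E0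
    have hacyc : H.IsAcyclic := by
      intro v w hw
      have hsub : ∀ e ∈ w.edges, e ∈ G.edgeSet := fun e he =>
        hE0G (hHE ▸ w.edges_subset_edgeSet he)
      obtain ⟨e, f, he, hf, hef, hcol⟩ := hgal v (w.transfer G hsub) (hw.transfer hsub)
      rw [SimpleGraph.Walk.edges_transfer] at he hf
      have hex : ∃ x, g x = e := by
        have : (e : Sym2 V) ∈ E0 := hHE ▸ w.edges_subset_edgeSet he
        obtain ⟨e', ⟨x, rfl⟩, hval⟩ := this
        exact ⟨x, Subtype.ext hval⟩
      have hfx : ∃ y, g y = f := by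
        have : (f : Sym2 V) ∈ E0 := hHE ▸ w.edges_subset_edgeSet hf
        obtain ⟨e', ⟨y, rfl⟩, hval⟩ := this
        exact ⟨y, Subtype.ext hval⟩
      obtain ⟨x, rfl⟩ := hex
      obtain ⟨y, rfl⟩ := hfx
      apply hef
      apply congrArg g
      apply Subtype.ext
      rw [← hg x, ← hg y, hcol]
    -- count edges of H
    have hcount : H.edgeSet.ncard = k := by
      rw [hHE, hE0, Set.ncard_image_of_injective _ Subtype.val_injective,
        ← Set.image_univ, Set.ncard_image_of_injective _ hginj, Set.ncard_univ,
        Nat.card_coe_set_eq, hk]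
    have h1 := GallaiAux.forest_bound H hacyc
    have h2 := GallaiAux.card_comp_le_of_le hHG
    omega
end

section
/- Let n ≥ 2 and fix a Hamiltonian path of the complete graph K_n, given by a bijection v from {1,…,n} to the vertex set. Then the number of maximal Gallai partitions of K_n for which this path is rainbow—i.e., partitions of the edge set of K_n into exactly n − 1 nonempty blocks such that every cycle of K_n has two distinct edges in a common block and such that the n − 1 edges {v(i), v(i+1)}, 1 ≤ i ≤ n−1, lie in pairwise distinct blocks—equals the Catalan number C_{n−1} = (1/n)·binomial(2n−2, n−1). -/
/-- The edge set of the complete graph `K_n` on vertices `0, …, n-1`, encoded as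
ordered pairs `(i, j)` with `i < j` (one for each unordered edge `{i, j}`). -/
abbrev KEdge (n : ℕ) := {p : Fin n × Fin n // p.1 < p.2}

/-- A partition of the edge set of `K_n` (encoded as a setoid, whose classes are the
nonempty blocks) is a Gallai partition if every cycle of `K_n` contains two distinct
edges lying in a common block. -/
def IsGallaiPartition {n : ℕ} (S : Setoid (KEdge n)) : Prop :=
  ∀ (v : Fin n) (w : (⊤ : SimpleGraph (Fin n)).Walk v v), w.IsCycle →
    ∃ p q : KEdge n, s(p.1.1, p.1.2) ∈ w.edges ∧ s(q.1.1, q.1.2) ∈ w.edges ∧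
      p ≠ q ∧ S.r p q

/-- The ordered version of the unordered pair `{a, b}`. -/
def unedge {n : ℕ} (a b : Fin n) : Fin n × Fin n := if a < b then (a, b) else (b, a)

theorem unedge_lt {n : ℕ} {a b : Fin n} (h : a ≠ b) :
    (unedge a b).1 < (unedge a b).2 := by
  unfold unedge
  rcases h.lt_or_gt with h1 | h1
  · rw [if_pos h1]; exact h1
  · rw [if_neg (asymm h1)]; exact h1

/-- The edge `{a, b}` of `K_n`, for distinct vertices `a` and `b`. -/
def mkKEdge {n : ℕ} (a b : Fin n) (h : a ≠ b) : KEdge n := ⟨unedge a b, unedge_lt h⟩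

/-- The `i`-th edge of the Hamiltonian path determined by the vertex ordering `v`,
namely the edge `{v i, v (i+1)}`. -/
def pathEdge {n : ℕ} (v : Equiv.Perm (Fin n)) (i : Fin (n - 1)) : KEdge n :=
  mkKEdge (v ⟨i.1, lt_of_lt_of_le i.2 (Nat.sub_le n 1)⟩)
    (v ⟨i.1 + 1, by have := i.2; omega⟩)
    (v.injective.ne (Fin.ne_of_val_ne (Nat.lt_succ_self i.1).ne))

namespace GallaiAux

open BinaryTree

/-- color of edge (i,j) in the binary-tree recursive partition -/
def gcol : BinaryTree Unit → ℕ → ℕ → ℕ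
  | BinaryTree.nil, _, _ => 0
  | BinaryTree.node _ l r, i, j =>
      if j ≤ l.numNodes then gcol l i j
      else if l.numNodes < i then l.numNodes + 1 + gcol r (i - (l.numNodes + 1)) (j - (l.numNodes + 1))
      else l.numNodes

/-- depth of the split `k` in the tree -/
def gdep : BinaryTree Unit → ℕ → ℕ
  | BinaryTree.nil, _ => 0
  | BinaryTree.node _ l r, k =>
      if k < l.numNodes then gdep l k + 1
      else if k = l.numNodes then 0
      else gdep r (k - (l.numNodes + 1)) + 1

theorem gcol_bounds : ∀ (t : BinaryTree Unit) (i j : ℕ), i < j → j ≤ t.numNodes →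
    i ≤ gcol t i j ∧ gcol t i j < j := by
  intro t
  induction t with
  | nil => intro i j hij hj; simp [BinaryTree.numNodes] at hj; omega
  | node a l r ihl ihr =>
    intro i j hij hj
    simp only [BinaryTree.numNodes] at hj
    simp only [gcol]
    by_cases h1 : j ≤ l.numNodes
    · rw [if_pos h1]; exact ihl i j hij (by omega)
    · rw [if_neg h1]
      by_cases h2 : l.numNodes < i
      · rw [if_pos h2]
        have := ihr (i - (l.numNodes + 1)) (j - (l.numNodes + 1)) (by omega) (by omega)
        omega
      · rw [if_neg h2]; omega

theorem gcol_base (t : BinaryTree Unit) (i : ℕ) (h : i + 1 ≤ t.numNodes) : gcol t i (i+1) = i := by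
  have := gcol_bounds t i (i+1) (by omega) h
  omega

theorem gdep_node (a : Unit) (l r : BinaryTree Unit) (k : ℕ) :
    gdep (BinaryTree.node a l r) k = if k < l.numNodes then gdep l k + 1
      else if k = l.numNodes then 0 else gdep r (k - (l.numNodes + 1)) + 1 := rfl

theorem gcol_node (a : Unit) (l r : BinaryTree Unit) (i j : ℕ) :
    gcol (BinaryTree.node a l r) i j = if j ≤ l.numNodes then gcol l i j
      else if l.numNodes < i then l.numNodes + 1 + gcol r (i - (l.numNodes + 1)) (j - (l.numNodes + 1))
      else l.numNodes := rfl

theorem gdep_lt : ∀ (t : BinaryTree Unit) (i j k : ℕ), i < j → j ≤ t.numNodes →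
    i ≤ k → k < j → k ≠ gcol t i j → gdep t (gcol t i j) < gdep t k := by
  intro t
  induction t with
  | nil => intro i j k hij hj; simp [BinaryTree.numNodes] at hj; omega
  | node a l r ihl ihr =>
    intro i j k hij hj hik hkj hne
    simp only [BinaryTree.numNodes] at hj
    rw [gcol_node] at hne ⊢
    by_cases h1 : j ≤ l.numNodes
    · rw [if_pos h1] at hne ⊢
      have hb := gcol_bounds l i j hij (by omega)
      rw [gdep_node, if_pos (by omega : gcol l i j < l.numNodes),
        gdep_node, if_pos (by omega : k < l.numNodes)]
      have := ihl i j k hij (by omega) hik hkj hne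
      omega
    · rw [if_neg h1] at hne ⊢
      by_cases h2 : l.numNodes < i
      · rw [if_pos h2] at hne ⊢
        have hb := gcol_bounds r (i - (l.numNodes + 1)) (j - (l.numNodes + 1)) (by omega) (by omega)
        rw [gdep_node, if_neg (by omega), if_neg (by omega),
          gdep_node, if_neg (by omega : ¬ k < l.numNodes), if_neg (by omega : ¬ k = l.numNodes)]
        have e1 : l.numNodes + 1 + gcol r (i - (l.numNodes + 1)) (j - (l.numNodes + 1)) - (l.numNodes + 1)
            = gcol r (i - (l.numNodes + 1)) (j - (l.numNodes + 1)) := by omega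
        rw [e1]
        have := ihr (i - (l.numNodes + 1)) (j - (l.numNodes + 1)) (k - (l.numNodes + 1))
          (by omega) (by omega) (by omega) (by omega) (by omega)
        omega
      · rw [if_neg h2] at hne ⊢
        have e1 : gdep (BinaryTree.node a l r) l.numNodes = 0 := by
          rw [gdep_node, if_neg (lt_irrefl _), if_pos rfl]
        rw [e1]
        rcases Nat.lt_or_ge k l.numNodes with h3 | h3
        · rw [gdep_node, if_pos h3]; omega
        · rw [gdep_node, if_neg (by omega), if_neg (by omega)]; omega

theorem gcol_inj : ∀ (t s : BinaryTree Unit), t.numNodes = s.numNodes →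
    (∀ i j, i < j → j ≤ t.numNodes → gcol t i j = gcol s i j) → t = s := by
  intro t
  induction t with
  | nil =>
    intro s hn _
    cases s with
    | nil => rfl
    | node b l2 r2 => simp [BinaryTree.numNodes] at hn
  | node a l r ihl ihr =>
    intro s hn hcol
    cases s with
    | nil => simp [BinaryTree.numNodes] at hn
    | node b l2 r2 =>
      simp only [BinaryTree.numNodes] at hn
      have hN : l.numNodes + r.numNodes + 1 = l2.numNodes + r2.numNodes + 1 := hn
      -- root split equality
      have hroot : l.numNodes = l2.numNodes := by
        have h := hcol 0 (l.numNodes + r.numNodes + 1) (by omega) (by simp [BinaryTree.numNodes])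
        simp only [gcol] at h
        rw [if_neg (by omega), if_neg (by omega)] at h
        rw [if_neg (by omega), if_neg (by omega)] at h
        exact h
      have ha : a = b := rfl
      have hl : l = l2 := by
        apply ihl l2 hroot
        intro i j hij hj
        have h := hcol i j hij (by simp [BinaryTree.numNodes]; omega)
        simp only [gcol] at h
        rw [if_pos (by omega), if_pos (by omega)] at h
        exact h
      have hr : r = r2 := by
        apply ihr r2 (by omega)
        intro i j hij hj
        have h := hcol (l.numNodes + 1 + i) (l.numNodes + 1 + j) (by omega)
          (by simp [BinaryTree.numNodes]; omega)
        simp only [gcol] at h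
        rw [if_neg (by omega), if_pos (by omega)] at h
        rw [if_neg (by omega), if_pos (by omega)] at h
        rw [← hroot] at h
        simp only [Nat.add_sub_cancel_left] at h
        omega
      rw [ha, hl, hr]

/-- build the tree from a coloring function -/
def buildTree (c : ℕ → ℕ → ℕ) : ℕ → BinaryTree Unit
  | 0 => BinaryTree.nil
  | (M+1) =>
      BinaryTree.node () (buildTree c (min (c 0 (M+1)) M))
        (buildTree (fun i j => c (i + (min (c 0 (M+1)) M + 1)) (j + (min (c 0 (M+1)) M + 1))
          - (min (c 0 (M+1)) M + 1)) (M - min (c 0 (M+1)) M))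
  decreasing_by
    · exact Nat.lt_succ_of_le (Nat.min_le_right _ _)
    · exact Nat.lt_succ_of_le (Nat.sub_le _ _)

theorem buildTree_numNodes (c : ℕ → ℕ → ℕ) : ∀ M, (buildTree c M).numNodes = M := by
  intro M
  induction M using Nat.strong_induction_on generalizing c with
  | _ M ih =>
    cases M with
    | zero => simp [buildTree, BinaryTree.numNodes]
    | succ M =>
      rw [buildTree]
      simp only [BinaryTree.numNodes]
      rw [ih _ (Nat.lt_succ_of_le (Nat.min_le_right _ _)),
        ih _ (Nat.lt_succ_of_le (Nat.sub_le _ _))]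
      omega

/-- hypotheses on the coloring function on `[0, M]` -/
def Hbase (c : ℕ → ℕ → ℕ) (M : ℕ) : Prop := ∀ i, i + 1 ≤ M → c i (i+1) = i

def Htri (c : ℕ → ℕ → ℕ) (M : ℕ) : Prop :=
  ∀ i k j, i < k → k < j → j ≤ M → c i j = c i k ∨ c i j = c k j ∨ c i k = c k j

theorem cbound {c : ℕ → ℕ → ℕ} {M : ℕ} (hb : Hbase c M) (ht : Htri c M) :
    ∀ i j, i < j → j ≤ M → i ≤ c i j ∧ c i j < j := by
  intro i j
  induction j with
  | zero => omega
  | succ j ih =>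
    intro hij hj
    rcases Nat.lt_or_ge i j with h | h
    · have h1 := ih h (by omega)
      have h2 : c j (j+1) = j := hb j hj
      rcases ht i j (j+1) h (by omega) hj with h3 | h3 | h3 <;> omega
    · have : i = j := by omega
      subst this
      have := hb i hj
      omega

theorem ccross {c : ℕ → ℕ → ℕ} {M : ℕ} (hb : Hbase c M) (ht : Htri c M) (hM : 1 ≤ M) :
    ∀ i j, i ≤ c 0 M → c 0 M < j → j ≤ M → c i j = c 0 M := by
  have hbd := cbound hb ht
  set r := c 0 M with hr
  have hrM : r < M := (hbd 0 M hM (le_refl M)).2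
  -- step 1 : for 0 < i ≤ r, c i M = r
  have s1 : ∀ i, 0 < i → i ≤ r → c i M = r := by
    intro i h0 hiR
    have h1 := hbd 0 i h0 (by omega)
    have h2 := hbd i M (by omega) (le_refl M)
    rcases ht 0 i M h0 (by omega) (le_refl M) with h3 | h3 | h3 <;> omega
  -- step 2 : for r < j < M, c 0 j = r
  have s2 : ∀ j, r < j → j < M → c 0 j = r := by
    intro j hrj hjM
    have h1 := hbd 0 j (by omega) (by omega)
    have h2 := hbd j M hjM (le_refl M)
    rcases ht 0 j M (by omega) hjM (le_refl M) with h3 | h3 | h3 <;> omega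
  intro i j hiR hrj hjM
  rcases Nat.eq_or_lt_of_le hjM with hj | hj
  · subst hj
    rcases Nat.eq_zero_or_pos i with h0 | h0
    · subst h0; rfl
    · exact s1 i h0 hiR
  · rcases Nat.eq_zero_or_pos i with h0 | h0
    · subst h0; exact s2 j hrj hj
    · have h1 := hbd 0 i h0 (by omega)
      have h2 := hbd i j (by omega) (by omega)
      have h4 := s2 j hrj hj
      rcases ht 0 i j h0 (by omega) (by omega) with h3 | h3 | h3 <;> omega

theorem buildTree_spec {c : ℕ → ℕ → ℕ} {M : ℕ} (hb : Hbase c M) (ht : Htri c M) :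
    ∀ i j, i < j → j ≤ M → gcol (buildTree c M) i j = c i j := by
  induction M using Nat.strong_induction_on generalizing c with
  | _ M ih =>
    cases M with
    | zero => omega
    | succ M =>
      intro i j hij hj
      have hbd := cbound hb ht
      have hrb := hbd 0 (M+1) (by omega) (le_refl _)
      have hmin : min (c 0 (M+1)) M = c 0 (M+1) := by omega
      set r := c 0 (M+1) with hrdef
      rw [buildTree]
      simp only [← hrdef, hmin]
      rw [gcol_node]
      simp only [buildTree_numNodes]
      by_cases h1 : j ≤ r
      · rw [if_pos h1]
        have hbl : Hbase c r := fun i hi => hb i (by omega)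
        have htl : Htri c r := fun i k j h1 h2 h3 => ht i k j h1 h2 (by omega)
        exact ih r (by omega) hbl htl i j hij h1
      · rw [if_neg h1]
        by_cases h2 : r < i
        · rw [if_pos h2]
          set c' := fun i j => c (i + (r+1)) (j + (r+1)) - (r+1) with hc'
          have hbr : Hbase c' (M - r) := by
            intro i hi
            simp only [hc']
            rw [show i + 1 + (r+1) = (i + (r+1)) + 1 from by omega]
            have := hb (i + (r+1)) (by omega)
            omega
          have htr : Htri c' (M - r) := by
            intro i k j hik hkj hjM
            simp only [hc']
            rcases ht (i + (r+1)) (k + (r+1)) (j + (r+1)) (by omega) (by omega) (by omega)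
              with h | h | h
            · left; omega
            · right; left; omega
            · right; right; omega
          have := ih (M - r) (by omega) hbr htr (i - (r+1)) (j - (r+1)) (by omega) (by omega)
          rw [this]
          simp only [hc']
          have hi' : i - (r+1) + (r+1) = i := by omega
          have hj' : j - (r+1) + (r+1) = j := by omega
          rw [hi', hj']
          have := hbd i j hij hj
          omega
        · rw [if_neg h2]
          exact (ccross hb ht (by omega) i j (by omega) (by omega) hj).symm

end GallaiAux

namespace GallaiAux

variable {n : ℕ}

theorem mkKEdge_sym2 (a b : Fin n) (h : a ≠ b) :
    s((mkKEdge a b h).1.1, (mkKEdge a b h).1.2) = s(a, b) := by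
  unfold mkKEdge unedge
  split_ifs with h1
  · rfl
  · exact Sym2.eq_swap

theorem kedge_eq_of_sym2 (p q : KEdge n) (h : s(p.1.1, p.1.2) = s(q.1.1, q.1.2)) : p = q := by
  rcases Sym2.eq_iff.1 h with ⟨h1, h2⟩ | ⟨h1, h2⟩
  · exact Subtype.ext (Prod.ext h1 h2)
  · exfalso
    have hp := p.2
    rw [h1, h2] at hp
    exact absurd q.2 (asymm hp)

theorem exists_kedge (e : Sym2 (Fin n)) (he : ¬ e.IsDiag) : ∃ p : KEdge n, s(p.1.1, p.1.2) = e := by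
  induction e using Sym2.ind with
  | _ a b =>
    have hab : a ≠ b := by simpa using he
    exact ⟨mkKEdge a b hab, mkKEdge_sym2 a b hab⟩

/-- the position of vertex `a` along the Hamiltonian path -/
def posN (v : Equiv.Perm (Fin n)) (a : Fin n) : ℕ := (v.symm a).val

theorem posN_inj (v : Equiv.Perm (Fin n)) {a b : Fin n} (h : posN v a = posN v b) : a = b :=
  v.symm.injective (Fin.val_injective h)

theorem posN_apply (v : Equiv.Perm (Fin n)) (a : Fin n) : posN v (v a) = a.val := by
  simp [posN]

/-- the colour of the unordered edge `e`, given by the binary tree `t` -/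
def colE (v : Equiv.Perm (Fin n)) (t : BinaryTree Unit) : Sym2 (Fin n) → ℕ :=
  Sym2.lift ⟨fun a b => gcol t (min (posN v a) (posN v b)) (max (posN v a) (posN v b)), by
    intro a b; simp only [min_comm, max_comm]⟩

theorem colE_mk (v : Equiv.Perm (Fin n)) (t : BinaryTree Unit) (a b : Fin n) :
    colE v t s(a, b) = gcol t (min (posN v a) (posN v b)) (max (posN v a) (posN v b)) := rfl

def ceF (v : Equiv.Perm (Fin n)) (t : BinaryTree Unit) (e : KEdge n) : ℕ := colE v t s(e.1.1, e.1.2)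

/-- the Gallai partition associated with a binary tree -/
def FS (v : Equiv.Perm (Fin n)) (t : BinaryTree Unit) : Setoid (KEdge n) := Setoid.ker (ceF v t)

theorem FS_r (v : Equiv.Perm (Fin n)) (t : BinaryTree Unit) (p q : KEdge n) :
    (FS v t).r p q ↔ ceF v t p = ceF v t q := Iff.rfl

/-- whether the edge `e` crosses the cut between positions `≤ k` and `> k` -/
def crossB (v : Equiv.Perm (Fin n)) (k : ℕ) : Sym2 (Fin n) → Bool :=
  Sym2.lift ⟨fun a b => decide (posN v a ≤ k) != decide (posN v b ≤ k), by
    intro a b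
    rcases Decidable.em (posN v a ≤ k) with h1 | h1 <;>
      rcases Decidable.em (posN v b ≤ k) with h2 | h2 <;> simp [h1, h2]⟩

theorem crossB_mk (v : Equiv.Perm (Fin n)) (k : ℕ) (a b : Fin n) :
    crossB v k s(a, b) = (decide (posN v a ≤ k) != decide (posN v b ≤ k)) := rfl

theorem cross_parity (v : Equiv.Perm (Fin n)) (k : ℕ) : ∀ {x y : Fin n}
    (w : (⊤ : SimpleGraph (Fin n)).Walk x y),
    (w.edges.countP (crossB v k)) % 2 =
      if decide (posN v x ≤ k) = decide (posN v y ≤ k) then 0 else 1 := by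
  intro x y w
  induction w with
  | nil => simp
  | @cons x z y h p ih =>
    rw [SimpleGraph.Walk.edges_cons, List.countP_cons, crossB_mk]
    rcases Decidable.em (posN v x ≤ k) with h1 | h1 <;>
      rcases Decidable.em (posN v z ≤ k) with h2 | h2 <;>
        rcases Decidable.em (posN v y ≤ k) with h3 | h3 <;>
          simp [h1, h2, h3] at ih ⊢ <;> omega

theorem colE_spec (v : Equiv.Perm (Fin n)) (t : BinaryTree Unit)
    (e : Sym2 (Fin n)) (he : ¬ e.IsDiag) :
    ∃ i j, i < j ∧ j ≤ n - 1 ∧ colE v t e = gcol t i j ∧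
      ∀ k, crossB v k e = true ↔ (i ≤ k ∧ k < j) := by
  induction e using Sym2.ind with
  | _ a b =>
    have hab : a ≠ b := by simpa using he
    have hpos : posN v a ≠ posN v b := fun hp => hab (posN_inj v hp)
    have hlta : posN v a < n := (v.symm a).isLt
    have hltb : posN v b < n := (v.symm b).isLt
    refine ⟨min (posN v a) (posN v b), max (posN v a) (posN v b), by omega, by omega,
      colE_mk v t a b, ?_⟩
    intro k
    rw [crossB_mk]
    rcases Decidable.em (posN v a ≤ k) with h1 | h1 <;>
      rcases Decidable.em (posN v b ≤ k) with h2 | h2 <;> simp [h1, h2] <;> omega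

theorem FS_gallai (v : Equiv.Perm (Fin n)) (t : BinaryTree Unit) (hm : t.numNodes = n - 1) :
    IsGallaiPartition (FS v t) := by
  intro u w hw
  have hnd : w.edges.Nodup := hw.edges_nodup
  have hsub : ∀ e ∈ w.edges, ¬ e.IsDiag := by
    intro e he
    have h2 := w.edges_subset_edgeSet he
    rw [SimpleGraph.edgeSet_top] at h2
    exact h2
  classical
  have hne : w.edges ≠ [] := by
    have h3 := hw.three_le_length
    have h4 := w.length_edges
    intro hcon
    rw [hcon] at h4
    simp at h4
    omega
  obtain ⟨e0, he0mem, he0min⟩ := Finset.exists_min_image w.edges.toFinset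
    (fun e => gdep t (colE v t e)) ((List.toFinset_nonempty_iff _).2 hne)
  rw [List.mem_toFinset] at he0mem
  obtain ⟨i0, j0, hij0, hj0, hcol0, hcr0⟩ := colE_spec v t e0 (hsub e0 he0mem)
  set K := gcol t i0 j0 with hK
  have hKb := gcol_bounds t i0 j0 hij0 (by omega)
  have hcross0 : crossB v K e0 = true := (hcr0 K).2 ⟨hKb.1, hKb.2⟩
  have hpar := cross_parity v K w
  rw [if_pos rfl] at hpar
  have hpos : 0 < w.edges.countP (crossB v K) :=
    List.countP_pos_iff.2 ⟨e0, he0mem, hcross0⟩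
  have hcount : 2 ≤ w.edges.countP (crossB v K) := by omega
  have hsecond : ∃ f ∈ w.edges, f ≠ e0 ∧ crossB v K f = true := by
    by_contra hcon
    push_neg at hcon
    have hfil : ∀ x ∈ w.edges.filter (crossB v K), x = e0 := by
      intro x hx
      rw [List.mem_filter] at hx
      by_contra hne2
      exact absurd hx.2 (hcon x hx.1 hne2)
    have hnd2 : (w.edges.filter (crossB v K)).Nodup := hnd.filter _
    have hlen2 : (w.edges.filter (crossB v K)).length = w.edges.countP (crossB v K) :=
      List.countP_eq_length_filter.symm
    rcases hfl : w.edges.filter (crossB v K) with _ | ⟨x, _ | ⟨y, l⟩⟩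
    · rw [hfl] at hlen2; simp at hlen2; omega
    · rw [hfl] at hlen2; simp at hlen2; omega
    · have hx := hfil x (by rw [hfl]; simp)
      have hy := hfil y (by rw [hfl]; simp)
      rw [hfl] at hnd2
      rw [hx, hy] at hnd2
      simp at hnd2
  obtain ⟨f, hfmem, hfne, hfcross⟩ := hsecond
  obtain ⟨i1, j1, hij1, hj1, hcol1, hcr1⟩ := colE_spec v t f (hsub f hfmem)
  have hcrK : i1 ≤ K ∧ K < j1 := (hcr1 K).1 hfcross
  have hmin' : gdep t K ≤ gdep t (gcol t i1 j1) := by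
    have := he0min f (List.mem_toFinset.2 hfmem)
    rw [hcol0, hcol1] at this
    exact this
  have hfK : gcol t i1 j1 = K := by
    by_contra hcon
    have := gdep_lt t i1 j1 K hij1 (by omega) hcrK.1 hcrK.2 (fun h => hcon h.symm)
    omega
  obtain ⟨p, hp⟩ := exists_kedge e0 (hsub e0 he0mem)
  obtain ⟨q, hq⟩ := exists_kedge f (hsub f hfmem)
  refine ⟨p, q, by rw [hp]; exact he0mem, by rw [hq]; exact hfmem, ?_, ?_⟩
  · intro hpq
    exact hfne (by rw [← hq, ← hpq, hp])
  · show ceF v t p = ceF v t q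
    unfold ceF
    rw [hp, hq, hcol0, hcol1, hfK]

theorem ceF_mkKEdge (v : Equiv.Perm (Fin n)) (t : BinaryTree Unit) (a b : Fin n) (h : a ≠ b) :
    ceF v t (mkKEdge a b h) = gcol t (min (posN v a) (posN v b)) (max (posN v a) (posN v b)) := by
  unfold ceF
  rw [mkKEdge_sym2, colE_mk]

theorem ceF_pathEdge (v : Equiv.Perm (Fin n)) (t : BinaryTree Unit) (hm : t.numNodes = n - 1)
    (k : Fin (n - 1)) : ceF v t (pathEdge v k) = k.val := by
  unfold pathEdge
  rw [ceF_mkKEdge, posN_apply, posN_apply]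
  simp only []
  have hk := k.2
  rw [min_eq_left (by omega), max_eq_right (by omega)]
  exact gcol_base t k.val (by omega)

theorem FS_rainbow (v : Equiv.Perm (Fin n)) (t : BinaryTree Unit) (hm : t.numNodes = n - 1) :
    ∀ i j : Fin (n - 1), (FS v t).r (pathEdge v i) (pathEdge v j) → i = j := by
  intro i j h
  have h2 : ceF v t (pathEdge v i) = ceF v t (pathEdge v j) := h
  rw [ceF_pathEdge v t hm, ceF_pathEdge v t hm] at h2
  exact Fin.ext h2

theorem ceF_lt (v : Equiv.Perm (Fin n)) (t : BinaryTree Unit) (hm : t.numNodes = n - 1)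
    (e : KEdge n) : ceF v t e < n - 1 := by
  have hdiag : ¬ (s(e.1.1, e.1.2)).IsDiag := by
    simp only [Sym2.mk_isDiag_iff]
    exact e.2.ne
  obtain ⟨i, j, hij, hj, hcol, _⟩ := colE_spec v t s(e.1.1, e.1.2) hdiag
  have := gcol_bounds t i j hij (by omega)
  show colE v t s(e.1.1, e.1.2) < n - 1
  omega

theorem FS_card (v : Equiv.Perm (Fin n)) (t : BinaryTree Unit) (hm : t.numNodes = n - 1) :
    Nat.card (Quotient (FS v t)) = n - 1 := by
  have e : Quotient (FS v t) ≃ Fin (n - 1) :=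
    { toFun := Quotient.lift (fun e => (⟨ceF v t e, ceF_lt v t hm e⟩ : Fin (n - 1)))
        (fun a b h => Fin.ext h)
      invFun := fun k => Quotient.mk (FS v t) (pathEdge v k)
      left_inv := by
        intro q
        induction q using Quotient.ind with
        | _ e =>
          apply Quotient.sound
          show ceF v t (pathEdge v _) = ceF v t e
          rw [ceF_pathEdge v t hm]
          exact rfl
      right_inv := by
        intro k
        exact Fin.ext (ceF_pathEdge v t hm k) }
  rw [Nat.card_congr e, Nat.card_eq_fintype_card, Fintype.card_fin]

/-- the edge joining the vertices in positions `i < j` -/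
def posEdge (v : Equiv.Perm (Fin n)) (i j : ℕ) (hij : i < j) (hjn : j < n) : KEdge n :=
  mkKEdge (v ⟨i, hij.trans hjn⟩) (v ⟨j, hjn⟩) (v.injective.ne (Fin.ne_of_val_ne hij.ne))

theorem ceF_posEdge (v : Equiv.Perm (Fin n)) (t : BinaryTree Unit) (i j : ℕ) (hij : i < j)
    (hjn : j < n) : ceF v t (posEdge v i j hij hjn) = gcol t i j := by
  unfold posEdge
  rw [ceF_mkKEdge, posN_apply, posN_apply]
  simp only []
  rw [min_eq_left (by omega), max_eq_right (by omega)]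

theorem posEdge_sym2 (v : Equiv.Perm (Fin n)) (i j : ℕ) (hij : i < j) (hjn : j < n) :
    s((posEdge v i j hij hjn).1.1, (posEdge v i j hij hjn).1.2)
      = s(v ⟨i, hij.trans hjn⟩, v ⟨j, hjn⟩) := mkKEdge_sym2 _ _ _

theorem kedge_eq_posEdge (v : Equiv.Perm (Fin n)) (e : KEdge n) :
    ∃ (i j : ℕ) (hij : i < j) (hjn : j < n), e = posEdge v i j hij hjn ∧
      i = min (posN v e.1.1) (posN v e.1.2) ∧ j = max (posN v e.1.1) (posN v e.1.2) := by
  have hab : e.1.1 ≠ e.1.2 := e.2.ne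
  have hpos : posN v e.1.1 ≠ posN v e.1.2 := fun hp => hab (posN_inj v hp)
  have h1 : posN v e.1.1 < n := (v.symm e.1.1).isLt
  have h2 : posN v e.1.2 < n := (v.symm e.1.2).isLt
  set i := min (posN v e.1.1) (posN v e.1.2)
  set j := max (posN v e.1.1) (posN v e.1.2)
  have hij : i < j := by omega
  have hjn : j < n := by omega
  refine ⟨i, j, hij, hjn, ?_, rfl, rfl⟩
  apply kedge_eq_of_sym2
  rw [posEdge_sym2]
  rcases Nat.lt_or_ge (posN v e.1.1) (posN v e.1.2) with h | h
  · have hi : (⟨i, hij.trans hjn⟩ : Fin n) = v.symm e.1.1 := by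
      apply Fin.ext
      show min (posN v e.1.1) (posN v e.1.2) = (v.symm e.1.1).val
      unfold posN at h ⊢; omega
    have hj : (⟨j, hjn⟩ : Fin n) = v.symm e.1.2 := by
      apply Fin.ext
      show max (posN v e.1.1) (posN v e.1.2) = (v.symm e.1.2).val
      unfold posN at h ⊢; omega
    rw [hi, hj, Equiv.apply_symm_apply, Equiv.apply_symm_apply]
  · have hi : (⟨i, hij.trans hjn⟩ : Fin n) = v.symm e.1.2 := by
      apply Fin.ext
      show min (posN v e.1.1) (posN v e.1.2) = (v.symm e.1.2).val
      unfold posN at h hpos ⊢; omega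
    have hj : (⟨j, hjn⟩ : Fin n) = v.symm e.1.1 := by
      apply Fin.ext
      show max (posN v e.1.1) (posN v e.1.2) = (v.symm e.1.1).val
      unfold posN at h hpos ⊢; omega
    rw [hi, hj, Equiv.apply_symm_apply, Equiv.apply_symm_apply]
    exact Sym2.eq_swap.symm

/-- triangle walk -/
def triWalk (a b c : Fin n) (hab : a ≠ b) (hbc : b ≠ c) (hca : c ≠ a) :
    (⊤ : SimpleGraph (Fin n)).Walk a a :=
  .cons (by rw [SimpleGraph.top_adj]; exact hab)
    (.cons (by rw [SimpleGraph.top_adj]; exact hbc)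
      (.cons (by rw [SimpleGraph.top_adj]; exact hca) .nil))

theorem triWalk_edges (a b c : Fin n) (hab : a ≠ b) (hbc : b ≠ c) (hca : c ≠ a) :
    (triWalk a b c hab hbc hca).edges = [s(a, b), s(b, c), s(c, a)] := rfl

theorem triWalk_isCycle (a b c : Fin n) (hab : a ≠ b) (hbc : b ≠ c) (hca : c ≠ a) :
    (triWalk a b c hab hbc hca).IsCycle := by
  rw [SimpleGraph.Walk.isCycle_def]
  refine ⟨(SimpleGraph.Walk.isTrail_def _).2 ?_, by simp [triWalk], ?_⟩
  · rw [triWalk_edges]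
    have hba := hab.symm
    have hcb := hbc.symm
    have hac := hca.symm
    simp only [List.nodup_cons, List.mem_cons, List.not_mem_nil, or_false, List.mem_singleton,
      List.nodup_nil, and_true, not_or, Sym2.eq_iff]
    tauto
  · show (List.tail [a, b, c, a]).Nodup
    have hba := hab.symm
    have hcb := hbc.symm
    have hac := hca.symm
    simp only [List.tail_cons, List.nodup_cons, List.mem_cons, List.not_mem_nil, or_false,
      List.mem_singleton, List.nodup_nil, and_true, not_or]
    tauto

section Sside

variable (v : Equiv.Perm (Fin n)) (S : Setoid (KEdge n))

open Classical in
/-- the index of the block containing the edge in positions `(i, j)` -/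
noncomputable def cfunF (i j : ℕ) : ℕ :=
  if h : i < j ∧ j < n then
    (if h2 : ∃ k : Fin (n - 1), S.r (posEdge v i j h.1 h.2) (pathEdge v k) then
      h2.choose.val else 0)
  else 0

theorem exu (hcard : Nat.card (Quotient S) = n - 1)
    (hrb : ∀ i j : Fin (n - 1), S.r (pathEdge v i) (pathEdge v j) → i = j)
    (e : KEdge n) : ∃ k : Fin (n - 1), S.r e (pathEdge v k) := by
  have hinj : Function.Injective (fun k : Fin (n - 1) => Quotient.mk S (pathEdge v k)) := by
    intro a b h
    exact hrb a b (Quotient.exact h)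
  have hfin : Finite (Quotient S) := Quotient.finite S
  have hbij : Function.Bijective (fun k : Fin (n - 1) => Quotient.mk S (pathEdge v k)) :=
    (Nat.bijective_iff_injective_and_card _).2
      ⟨hinj, by rw [Nat.card_eq_fintype_card, Fintype.card_fin, hcard]⟩
  obtain ⟨k, hk⟩ := hbij.2 (Quotient.mk S e)
  exact ⟨k, S.iseqv.symm (Quotient.exact hk)⟩

theorem idx_unique (hrb : ∀ i j : Fin (n - 1), S.r (pathEdge v i) (pathEdge v j) → i = j)
    {e : KEdge n} {k k' : Fin (n - 1)} (h1 : S.r e (pathEdge v k)) (h2 : S.r e (pathEdge v k')) :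
    k = k' :=
  hrb k k' (S.iseqv.trans (S.iseqv.symm h1) h2)

theorem cfunF_eq (hrb : ∀ i j : Fin (n - 1), S.r (pathEdge v i) (pathEdge v j) → i = j)
    {i j : ℕ} (hij : i < j) (hjn : j < n) {k : Fin (n - 1)}
    (h : S.r (posEdge v i j hij hjn) (pathEdge v k)) : cfunF v S i j = k.val := by
  unfold cfunF
  rw [dif_pos (⟨hij, hjn⟩ : i < j ∧ j < n)]
  have h2 : ∃ k : Fin (n - 1), S.r (posEdge v i j hij hjn) (pathEdge v k) := ⟨k, h⟩
  rw [dif_pos h2]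
  exact congrArg Fin.val (idx_unique v S hrb h2.choose_spec h)

theorem cfunF_congr (hcard : Nat.card (Quotient S) = n - 1)
    (hrb : ∀ i j : Fin (n - 1), S.r (pathEdge v i) (pathEdge v j) → i = j)
    {i j i' j' : ℕ} (hij : i < j) (hjn : j < n) (hij' : i' < j') (hjn' : j' < n)
    (h : S.r (posEdge v i j hij hjn) (posEdge v i' j' hij' hjn')) :
    cfunF v S i j = cfunF v S i' j' := by
  obtain ⟨k, hk⟩ := exu v S hcard hrb (posEdge v i' j' hij' hjn')
  rw [cfunF_eq v S hrb hij hjn (S.iseqv.trans h hk), cfunF_eq v S hrb hij' hjn' hk]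

theorem cfunF_base (hrb : ∀ i j : Fin (n - 1), S.r (pathEdge v i) (pathEdge v j) → i = j) :
    Hbase (cfunF v S) (n - 1) := by
  intro i hi
  have hjn : i + 1 < n := by omega
  have hin1 : i < n - 1 := by omega
  have hpe : posEdge v i (i + 1) (Nat.lt_succ_self i) hjn = pathEdge v ⟨i, hin1⟩ := rfl
  have hk : S.r (posEdge v i (i + 1) (Nat.lt_succ_self i) hjn) (pathEdge v ⟨i, hin1⟩) := by
    rw [hpe]
    try exact S.iseqv.refl _
  exact cfunF_eq v S hrb (Nat.lt_succ_self i) hjn hk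

theorem cfunF_tri (hgal : IsGallaiPartition S) (hcard : Nat.card (Quotient S) = n - 1)
    (hrb : ∀ i j : Fin (n - 1), S.r (pathEdge v i) (pathEdge v j) → i = j) :
    Htri (cfunF v S) (n - 1) := by
  intro i k j hik hkj hjn1
  have hjn : j < n := by omega
  have hkn : k < n := by omega
  have hin : i < n := by omega
  have hij : i < j := by omega
  have hab : v ⟨i, hin⟩ ≠ v ⟨k, hkn⟩ := v.injective.ne (by simp [Fin.ext_iff]; omega)
  have hbc : v ⟨k, hkn⟩ ≠ v ⟨j, hjn⟩ := v.injective.ne (by simp [Fin.ext_iff]; omega)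
  have hca : v ⟨j, hjn⟩ ≠ v ⟨i, hin⟩ := v.injective.ne (by simp [Fin.ext_iff]; omega)
  obtain ⟨p, q, hp, hq, hpq, hr⟩ := hgal (v ⟨i, hin⟩)
    (triWalk _ _ _ hab hbc hca) (triWalk_isCycle _ _ _ hab hbc hca)
  rw [triWalk_edges] at hp hq
  simp only [List.mem_cons, List.not_mem_nil, or_false] at hp hq
  -- identify the edges
  have hE1 : ∀ r : KEdge n, s(r.1.1, r.1.2) = s(v ⟨i, hin⟩, v ⟨k, hkn⟩) →
      r = posEdge v i k hik hkn :=
    fun r h => kedge_eq_of_sym2 r _ (h.trans (posEdge_sym2 v i k hik hkn).symm)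
  have hE2 : ∀ r : KEdge n, s(r.1.1, r.1.2) = s(v ⟨k, hkn⟩, v ⟨j, hjn⟩) →
      r = posEdge v k j hkj hjn :=
    fun r h => kedge_eq_of_sym2 r _ (h.trans (posEdge_sym2 v k j hkj hjn).symm)
  have hE3 : ∀ r : KEdge n, s(r.1.1, r.1.2) = s(v ⟨j, hjn⟩, v ⟨i, hin⟩) →
      r = posEdge v i j hij hjn :=
    fun r h => kedge_eq_of_sym2 r _ ((h.trans Sym2.eq_swap).trans (posEdge_sym2 v i j hij hjn).symm)
  have congr12 := fun h => cfunF_congr v S hcard hrb hik hkn hkj hjn h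
  have congr13 := fun h => cfunF_congr v S hcard hrb hik hkn hij hjn h
  have congr23 := fun h => cfunF_congr v S hcard hrb hkj hjn hij hjn h
  rcases hp with hp | hp | hp <;> rcases hq with hq | hq | hq
  · exact absurd ((hE1 p hp).trans (hE1 q hq).symm) hpq
  · -- p = E1, q = E2
    rw [hE1 p hp, hE2 q hq] at hr
    exact Or.inr (Or.inr (congr12 hr))
  · -- p = E1, q = E3
    rw [hE1 p hp, hE3 q hq] at hr
    exact Or.inl (congr13 hr).symm
  · rw [hE2 p hp, hE1 q hq] at hr
    exact Or.inr (Or.inr (congr12 (S.iseqv.symm hr)))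
  · exact absurd ((hE2 p hp).trans (hE2 q hq).symm) hpq
  · rw [hE2 p hp, hE3 q hq] at hr
    exact Or.inr (Or.inl (congr23 hr).symm)
  · rw [hE3 p hp, hE1 q hq] at hr
    exact Or.inl (congr13 (S.iseqv.symm hr)).symm
  · rw [hE3 p hp, hE2 q hq] at hr
    exact Or.inr (Or.inl (congr23 (S.iseqv.symm hr)).symm)
  · exact absurd ((hE3 p hp).trans (hE3 q hq).symm) hpq

/-- the binary tree associated with a Gallai partition -/
noncomputable def GT : BinaryTree Unit := buildTree (cfunF v S) (n - 1)

theorem ceF_GT (hn : 2 ≤ n) (hgal : IsGallaiPartition S)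
    (hcard : Nat.card (Quotient S) = n - 1)
    (hrb : ∀ i j : Fin (n - 1), S.r (pathEdge v i) (pathEdge v j) → i = j)
    (e : KEdge n) {k : Fin (n - 1)} (hk : S.r e (pathEdge v k)) :
    ceF v (GT v S) e = k.val := by
  obtain ⟨i, j, hij, hjn, hpe, hi, hj⟩ := kedge_eq_posEdge v e
  rw [hpe, ceF_posEdge]
  have hb := cfunF_base v S hrb
  have ht := cfunF_tri v S hgal hcard hrb
  have hjn1 : j ≤ n - 1 := by omega
  rw [GT, buildTree_spec hb ht i j hij hjn1]
  rw [hpe] at hk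
  exact cfunF_eq v S hrb hij hjn hk

theorem FS_GT_eq (hn : 2 ≤ n) (hgal : IsGallaiPartition S)
    (hcard : Nat.card (Quotient S) = n - 1)
    (hrb : ∀ i j : Fin (n - 1), S.r (pathEdge v i) (pathEdge v j) → i = j) :
    FS v (GT v S) = S := by
  apply Setoid.ext
  intro p q
  obtain ⟨kp, hkp⟩ := exu v S hcard hrb p
  obtain ⟨kq, hkq⟩ := exu v S hcard hrb q
  constructor
  · intro h
    have h1 : ceF v (GT v S) p = ceF v (GT v S) q := h
    rw [ceF_GT v S hn hgal hcard hrb p hkp, ceF_GT v S hn hgal hcard hrb q hkq] at h1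
    have h2 : kp = kq := Fin.ext h1
    exact S.iseqv.trans hkp (h2 ▸ S.iseqv.symm hkq)
  · intro h
    have h2 : kp = kq := idx_unique v S hrb (S.iseqv.trans (S.iseqv.symm h) hkp) hkq
    show ceF v (GT v S) p = ceF v (GT v S) q
    rw [ceF_GT v S hn hgal hcard hrb p hkp, ceF_GT v S hn hgal hcard hrb q hkq, h2]

end Sside

theorem GT_FS_eq (v : Equiv.Perm (Fin n)) (t : BinaryTree Unit) (hm : t.numNodes = n - 1)
    (hn : 2 ≤ n) : GT v (FS v t) = t := by
  apply gcol_inj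
  · rw [GT, buildTree_numNodes, hm]
  · intro i j hij hj
    rw [GT, buildTree_numNodes] at hj
    have hb := cfunF_base v (FS v t) (FS_rainbow v t hm)
    have ht := cfunF_tri v (FS v t) (FS_gallai v t hm) (FS_card v t hm) (FS_rainbow v t hm)
    rw [GT, buildTree_spec hb ht i j hij hj]
    have hjn : j < n := by omega
    obtain ⟨k, hk⟩ := exu v (FS v t) (FS_card v t hm) (FS_rainbow v t hm) (posEdge v i j hij hjn)
    rw [cfunF_eq v (FS v t) (FS_rainbow v t hm) hij hjn hk]
    have h2 : ceF v t (posEdge v i j hij hjn) = ceF v t (pathEdge v k) := hk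
    rw [ceF_posEdge, ceF_pathEdge v t hm] at h2
    exact h2.symm

end GallaiAux

/-- For `n ≥ 2` and a fixed Hamiltonian path of `K_n`, given by an ordering `v` of
the vertices, the number of maximal Gallai partitions of `K_n` (those with exactly
`n - 1` blocks) for which this path is rainbow (its `n - 1` edges lie in pairwise
distinct blocks) is the Catalan number `C_{n-1}`. -/
theorem card_maximal_gallai_partitions_with_rainbow_path
    (n : ℕ) (hn : 2 ≤ n) (v : Equiv.Perm (Fin n)) :
    Nat.card {S : Setoid (KEdge n) //
        IsGallaiPartition S ∧ Nat.card (Quotient S) = n - 1 ∧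
        ∀ i j : Fin (n - 1), S.r (pathEdge v i) (pathEdge v j) → i = j} =
      catalan (n - 1) := by
  classical
  open GallaiAux in
  have hequiv : {S : Setoid (KEdge n) //
      IsGallaiPartition S ∧ Nat.card (Quotient S) = n - 1 ∧
      ∀ i j : Fin (n - 1), S.r (pathEdge v i) (pathEdge v j) → i = j} ≃
      {t : BinaryTree Unit // t.numNodes = n - 1} :=
    { toFun := fun s => ⟨GT v s.1, buildTree_numNodes _ _⟩
      invFun := fun t => ⟨FS v t.1, FS_gallai v t.1 t.2, FS_card v t.1 t.2, FS_rainbow v t.1 t.2⟩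
      left_inv := fun s => Subtype.ext (FS_GT_eq v s.1 hn s.2.1 s.2.2.1 s.2.2.2)
      right_inv := fun t => Subtype.ext (GT_FS_eq v t.1 t.2 hn) }
  rw [Nat.card_congr hequiv,
    Nat.card_congr (Equiv.subtypeEquivRight
      (fun t : BinaryTree Unit => (BinaryTree.mem_treesOfNumNodesEq (n := n - 1)).symm)),
    Nat.card_eq_finsetCard, BinaryTree.treesOfNumNodesEq_card_eq_catalan]
end
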